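/- Let V be a finite-dimensional real vector space and ω : V × V → ℝ a nondegenerate alternating bilinear form. Let α, β ∈ V* be linear functionals and let X_α, X_β ∈ V be the unique vectors with ω(X_α, w) = α(w) and ω(X_β, w) = β(w) for all w ∈ V. Then the alternating bilinear form ω' defined by ω'(u, w) := ω(u, w) + α(u)β(w) − α(w)β(u) is nondegenerate if and only if 1 + ω(X_α, X_β) ≠ 0. (This is the pointwise linear-algebra content of the statement that the deformed form ω_τ = ω + τ·dF∧dG is symplectic precisely where 1 − τ{F,G} ≠ 0.) -/
import Mathlib


/-- pointwise linear algebra behind the deformation `ω_τ = ω + τ·dF∧dG`: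
for a nondegenerate alternating bilinear form `ω` on a finite-dimensional real vector
space and linear functionals `α, β` with symplectically dual vectors `X_α, X_β`, the
deformed alternating form `ω'(u,w) = ω(u,w) + α(u)β(w) − α(w)β(u)` is nondegenerate if
and only if `1 + ω(X_α, X_β) ≠ 0`. -/
theorem stmt_15 (V : Type*) [AddCommGroup V] [Module ℝ V] [FiniteDimensional ℝ V]
    (ω : V →ₗ[ℝ] V →ₗ[ℝ] ℝ)
    (halt : ∀ u : V, ω u u = 0)
    (hnondeg : ∀ u : V, (∀ w : V, ω u w = 0) → u = 0)
    (α β : V →ₗ[ℝ] ℝ) (Xα Xβ : V)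
    (hXα : ∀ w : V, ω Xα w = α w) (hXβ : ∀ w : V, ω Xβ w = β w) :
    (∀ u : V, (∀ w : V, ω u w + α u * β w - α w * β u = 0) → u = 0) ↔
      1 + ω Xα Xβ ≠ 0 := by
  have hskew : ∀ a b : V, ω a b = - ω b a := by
    intro a b
    have h := halt (a + b)
    simp only [map_add, LinearMap.add_apply, halt] at h
    linarith
  have hαXα : α Xα = 0 := by rw [← hXα, halt]
  have hαXβ : α Xβ = ω Xα Xβ := (hXα Xβ).symm
  have hβXα : β Xα = - ω Xα Xβ := by rw [← hXβ, hskew]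
  constructor
  · intro hnd hc
    have hc' : ω Xα Xβ = -1 := by linarith
    have hXane : Xα ≠ 0 := by
      intro h
      rw [h] at hc'
      simp at hc'
    apply hXane
    apply hnd Xα
    intro w
    have : β Xα = 1 := by rw [hβXα, hc']; ring
    rw [hαXα, this, hXα]
    ring
  · intro hc u hu
    have key : u + α u • Xβ - β u • Xα = 0 := by
      apply hnondeg
      intro w
      simp only [map_sub, map_add, map_smul, LinearMap.sub_apply, LinearMap.add_apply,
        LinearMap.smul_apply, smul_eq_mul, hXα, hXβ]
      linarith [hu w]
    have hα0 : α u = 0 := by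
      have := congrArg α key
      simp only [map_sub, map_add, map_smul, smul_eq_mul, map_zero, hαXα, hαXβ] at this
      have h2 : α u * (1 + ω Xα Xβ) = 0 := by linarith
      rcases mul_eq_zero.mp h2 with h | h
      · exact h
      · exact absurd h hc
    have hβ0 : β u = 0 := by
      have := congrArg β key
      simp only [map_sub, map_add, map_smul, smul_eq_mul, map_zero, hβXα, hα0, zero_mul] at this
      have h2 : β u * (1 + ω Xα Xβ) = 0 := by linarith
      rcases mul_eq_zero.mp h2 with h | h
      · exact h
      · exact absurd h hc
    rw [hα0, hβ0] at key
    simpa using key
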